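/- Let κ = 1 and let T be a positive-rate stochastic transition matrix on {0,1} satisfying T(1,0,1)·T(0,1,0) = T(1,1,0)·T(0,0,1) and T(0,0,0) + T(1,1,0) ≠ T(0,1,0) + T(1,0,0). Set ρ_0 = (T(0,0,0)·T(1,1,0) − T(0,1,0)·T(1,0,0)) / (T(0,0,0) + T(1,1,0) − T(0,1,0) − T(1,0,0)) and ρ_1 = 1 − ρ_0. Then for all b ∈ {0,1}: ∑_{a_1,a_2 ∈ {0,1}} ρ_{a_1} ρ_{a_2} T(a_1,a_2,b) = ρ_b, i.e., the product (Bernoulli) measure with marginal ρ is invariant under the PCA with transition matrix T. -/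
import Mathlib


theorem stmt_14 (T : Fin 2 → Fin 2 → Fin 2 → ℝ)
    (hpos : ∀ a b c, 0 < T a b c)
    (hstoch : ∀ a b, T a b 0 + T a b 1 = 1)
    (hcond : T 1 0 1 * T 0 1 0 = T 1 1 0 * T 0 0 1)
    (hne : T 0 0 0 + T 1 1 0 ≠ T 0 1 0 + T 1 0 0)
    (ρ : Fin 2 → ℝ)
    (hρ0 : ρ 0 = (T 0 0 0 * T 1 1 0 - T 0 1 0 * T 1 0 0)
      / (T 0 0 0 + T 1 1 0 - T 0 1 0 - T 1 0 0))
    (hρ1 : ρ 1 = 1 - ρ 0) :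
    ∀ b, ∑ a₁, ∑ a₂, ρ a₁ * ρ a₂ * T a₁ a₂ b = ρ b := by
  have hD : (T 0 0 0 + T 1 1 0 - T 0 1 0 - T 1 0 0) ≠ 0 := by
    intro h; apply hne; linarith
  have hr' : ρ 0 * (T 0 0 0 + T 1 1 0 - T 0 1 0 - T 1 0 0)
      = T 0 0 0 * T 1 1 0 - T 0 1 0 * T 1 0 0 := by
    rw [hρ0]; field_simp
  have hK : (1 - T 1 0 0) * T 0 1 0 = T 1 1 0 * (1 - T 0 0 0) := by
    linear_combination hcond - T 0 1 0 * hstoch 1 0 + T 1 1 0 * hstoch 0 0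
  have hP : ρ 0 * (T 0 0 0 + T 1 1 0 - T 0 1 0 - T 1 0 0) = T 1 1 0 - T 0 1 0 := by
    linear_combination hr' + hK
  have h0 : ρ 0 * ρ 0 * T 0 0 0 + ρ 0 * (1 - ρ 0) * T 0 1 0
      + (1 - ρ 0) * ρ 0 * T 1 0 0 + (1 - ρ 0) * (1 - ρ 0) * T 1 1 0 = ρ 0 := by
    have key : (T 0 0 0 + T 1 1 0 - T 0 1 0 - T 1 0 0) *
        (ρ 0 * ρ 0 * T 0 0 0 + ρ 0 * (1 - ρ 0) * T 0 1 0
          + (1 - ρ 0) * ρ 0 * T 1 0 0 + (1 - ρ 0) * (1 - ρ 0) * T 1 1 0)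
        = (T 0 0 0 + T 1 1 0 - T 0 1 0 - T 1 0 0) * ρ 0 := by
      linear_combination
        (ρ 0 * (T 0 0 0 + T 1 1 0 - T 0 1 0 - T 1 0 0) + (T 1 1 0 - T 0 1 0)
          + (T 0 1 0 + T 1 0 0 - 2 * T 1 1 0 - 1)) * hP + hK
    exact mul_left_cancel₀ hD key
  intro b
  fin_cases b <;> simp only [Fin.sum_univ_two, hρ1, Fin.isValue, Fin.mk_zero, Fin.mk_one]
  · linear_combination h0
  · linear_combination -h0 + ρ 0 * ρ 0 * hstoch 0 0 + ρ 0 * (1 - ρ 0) * hstoch 0 1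
      + (1 - ρ 0) * ρ 0 * hstoch 1 0 + (1 - ρ 0) * (1 - ρ 0) * hstoch 1 1
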